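/- arXiv:1704.01101 — 4 statements merged into one kernel-verified Lean document; each statement's English description precedes it below -/
import Mathlib

section
/- Let d_AB be a martingale. Define d_B(λ) = 1 and, for nonempty σ of length n, d_B(σ) = 2^{-n} · Σ_{τ ∈ Σ^n} d_AB(τ ⊎ σ), where τ ⊎ σ denotes the length-2n interleaving τ₀σ₀…τ_{n-1}σ_{n-1}. Then d_B is a martingale. -/
/-- Interleaving of two strings, taking bits alternately starting with the first list:
`ilv σ τ = σ₀τ₀σ₁τ₁…`. -/
def ilv : List Bool → List Bool → List Bool
  | [], τ => τ
  | a :: σ, τ => a :: ilv τ σ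
termination_by σ τ => σ.length + τ.length
decreasing_by simp; omega

def IsMartingale (d : List Bool → ℝ) : Prop :=
  (∀ σ, 0 ≤ d σ) ∧ d [] = 1 ∧ ∀ σ, d (σ ++ [false]) + d (σ ++ [true]) = 2 * d σ

lemma ilv_append (τ : List Bool) : ∀ (σ l1 l2 : List Bool), τ.length = σ.length →
    ilv (τ ++ l1) (σ ++ l2) = ilv τ σ ++ ilv l1 l2 := by
  induction τ with
  | nil => intro σ l1 l2 h
           obtain rfl : σ = [] := by simpa using h.symm
           simp [ilv]
  | cons a τ' ih =>
    rintro (_ | ⟨b, σ'⟩) l1 l2 h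
    · simp at h
    · simp only [List.cons_append, ilv]
      rw [ih σ' l1 l2 (by simpa using h)]

lemma ilv_snoc (τ σ : List Bool) (a b : Bool) (h : τ.length = σ.length) :
    ilv (τ ++ [a]) (σ ++ [b]) = ilv τ σ ++ [a, b] := by
  rw [ilv_append τ σ [a] [b] h]; simp [ilv]

lemma ofFn_snoc {n : ℕ} (u : Fin n → Bool) (a : Bool) :
    List.ofFn (Fin.snoc u a : Fin (n+1) → Bool) = List.ofFn u ++ [a] := by
  rw [List.ofFn_succ']
  simp [List.concat_eq_append]

lemma dB_formula (dAB dB : List Bool → ℝ) (h : IsMartingale dAB) (h0 : dB [] = 1)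
    (hdef : ∀ σ : List Bool, σ ≠ [] →
      dB σ = ((2 : ℝ) ^ σ.length)⁻¹ *
        ∑ v : Fin σ.length → Bool, dAB (ilv (List.ofFn v) σ)) :
    ∀ σ : List Bool, dB σ = ((2 : ℝ) ^ σ.length)⁻¹ *
        ∑ v : Fin σ.length → Bool, dAB (ilv (List.ofFn v) σ) := by
  intro σ
  rcases eq_or_ne σ [] with rfl | hne
  · simp [h0, ilv, h.2.1, Finset.sum_const]
  · exact hdef σ hne

/-- If `d_AB` is a martingale and `d_B(λ) = 1`,
`d_B(σ) = 2^{-n} Σ_{τ ∈ Σ^n} d_AB(τ ⊎ σ)` for nonempty `σ` of length `n`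
(where `τ ⊎ σ = τ₀σ₀…τ_{n-1}σ_{n-1}`), then `d_B` is a martingale. -/
theorem stmt_5 (dAB dB : List Bool → ℝ) (h : IsMartingale dAB)
    (h0 : dB [] = 1)
    (hdef : ∀ σ : List Bool, σ ≠ [] →
      dB σ = ((2 : ℝ) ^ σ.length)⁻¹ *
        ∑ v : Fin σ.length → Bool, dAB (ilv (List.ofFn v) σ)) :
    IsMartingale dB := by
  have key := dB_formula dAB dB h h0 hdef
  refine ⟨?_, h0, ?_⟩
  · intro σ
    rw [key σ]
    apply mul_nonneg (by positivity)
    exact Finset.sum_nonneg fun v _ => h.1 _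
  · intro σ
    set n := σ.length with hn
    have hlen : ∀ b : Bool, (σ ++ [b]).length = n + 1 := by simp [hn]
    have hsum : ∀ b : Bool,
        (∑ v : Fin (σ ++ [b]).length → Bool, dAB (ilv (List.ofFn v) (σ ++ [b])))
        = ∑ u : Fin n → Bool, ∑ a : Bool, dAB (ilv (List.ofFn u) σ ++ [a, b]) := by
      intro b
      have hlb : (σ ++ [b]).length = n + 1 := hlen b
      let e : (Fin (σ ++ [b]).length → Bool) ≃ (Fin (n+1) → Bool) :=
        Equiv.arrowCongr (finCongr hlb) (Equiv.refl Bool)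
      rw [← Equiv.sum_comp e.symm (fun v => dAB (ilv (List.ofFn v) (σ ++ [b])))]
      have h1 : ∀ w : Fin (n+1) → Bool, List.ofFn (e.symm w) = List.ofFn w := by
        intro w
        apply List.ext_getElem
        · simp [hlb]
        · intro i hi1 hi2
          simp [e, Equiv.arrowCongr, finCongr, Fin.cast]
          rfl
      simp only [h1]
      rw [← Equiv.sum_comp (Fin.snocEquiv (fun _ : Fin (n+1) => Bool)), Fintype.sum_prod_type]
      rw [Finset.sum_comm]
      refine Finset.sum_congr rfl fun u _ => Finset.sum_congr rfl fun a _ => ?_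
      have hv : ((Fin.snocEquiv (fun _ : Fin (n+1) => Bool)) (a, u))
          = (Fin.snoc u a : Fin (n+1) → Bool) := by
        funext x; exact Fin.snocEquiv_apply _ _ _
      rw [hv, ofFn_snoc, ilv_snoc _ _ _ _ (by simp [hn])]
    rw [key (σ ++ [false]), key (σ ++ [true]), hsum false, hsum true, key σ]
    simp only [hlen]
    rw [← mul_add, ← Finset.sum_add_distrib]
    have : ∀ u : Fin n → Bool,
        ((∑ a : Bool, dAB (ilv (List.ofFn u) σ ++ [a, false])) +
         ∑ a : Bool, dAB (ilv (List.ofFn u) σ ++ [a, true]))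
        = 4 * dAB (ilv (List.ofFn u) σ) := by
      intro u
      set w := ilv (List.ofFn u) σ
      rw [← Finset.sum_add_distrib]
      have hb : ∀ a : Bool, dAB (w ++ [a, false]) + dAB (w ++ [a, true]) = 2 * dAB (w ++ [a]) := by
        intro a
        have := h.2.2 (w ++ [a])
        simpa using this
      rw [Finset.sum_congr rfl fun a _ => hb a]
      have := h.2.2 w
      rw [Fintype.sum_bool]
      ring_nf
      ring_nf at this
      linarith
    rw [Finset.sum_congr rfl fun u _ => this u, ← Finset.mul_sum]
    ring
end

section
/- Let d_AB be a martingale, B an infinite binary sequence, and define d_B(σ) = 2^{-|σ|} Σ_{τ: |τ|=|σ|} d_AB(τ ⊎ σ). If for every N there are infinitely many n with Σ_{σ ∈ Σ^n} d_AB(σ₀B₀…σ_{n-1}B_{n-1}) ≥ N·2^n, then limsup_n d_B(B↾n) = ∞, i.e., d_B succeeds on B. -/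
def pre (X : ℕ → Bool) (n : ℕ) : List Bool := List.ofFn (fun i : Fin n => X i)

def Succeeds (f : ℕ → ℝ) : Prop := ∀ C : ℝ, ∃ᶠ n in Filter.atTop, C < f n

/-- Let `d_AB` be a martingale, `B` a sequence, and
`d_B(σ) = 2^{-|σ|} Σ_{|τ|=|σ|} d_AB(τ ⊎ σ)`. If for every `N` there are infinitely many
`n` with `Σ_{σ ∈ Σ^n} d_AB(σ₀B₀…σ_{n-1}B_{n-1}) ≥ N·2^n`, then
`limsup_n d_B(B↾n) = ∞`, i.e. `d_B` succeeds on `B`. -/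
theorem stmt_6 (dAB dB : List Bool → ℝ) (h : IsMartingale dAB) (B : ℕ → Bool)
    (hdef : ∀ σ : List Bool,
      dB σ = ((2 : ℝ) ^ σ.length)⁻¹ *
        ∑ v : Fin σ.length → Bool, dAB (ilv (List.ofFn v) σ))
    (hyp : ∀ N : ℝ, ∃ᶠ n in Filter.atTop,
      N * 2 ^ n ≤ ∑ v : Fin n → Bool, dAB (ilv (List.ofFn v) (pre B n))) :
    Succeeds (fun n => dB (pre B n)) := by
  intro C
  refine (hyp (C + 1)).mono fun n hn => ?_
  show C < dB (pre B n)
  have hlen : (pre B n).length = n := by simp [pre]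
  have key : ∀ (m : ℕ) (σ : List Bool), σ.length = m → ∀ f : List Bool → ℝ,
      ∑ v : Fin σ.length → Bool, f (List.ofFn v) = ∑ v : Fin m → Bool, f (List.ofFn v) := by
    intro m σ hm f; subst hm; rfl
  have hd : dB (pre B n) = ((2 : ℝ) ^ n)⁻¹ *
      ∑ v : Fin n → Bool, dAB (ilv (List.ofFn v) (pre B n)) := by
    rw [hdef, key n (pre B n) hlen (fun l => dAB (ilv l (pre B n))), hlen]
  rw [hd]
  have h2 : (0:ℝ) < 2 ^ n := by positivity
  rw [inv_mul_eq_div, lt_div_iff₀ h2]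
  nlinarith
end

section
/- Let L ⊆ Σ* × ℕ be a set (of 'requests') with Σ_{(σ,n) ∈ L} 2^{-n} ≤ 1. Then there exists a prefix-free set P ⊆ Σ* and a function assigning to each (σ,n) ∈ L a distinct code τ ∈ P with |τ| = n (the Kraft–Chaitin / Machine Existence theorem, combinatorial part). -/
open scoped ENNReal

/-- A set of strings is prefix-free if no element is a proper prefix of another. -/
def PrefixFree (S : Set (List Bool)) : Prop :=
  ∀ p ∈ S, ∀ q ∈ S, p <+: q → p = q

/-- MSB-first n-bit binary code of k. -/
def kcode : ℕ → ℕ → List Bool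
  | 0, _ => []
  | n+1, k => (decide (2^n ≤ k)) :: kcode n (k % 2^n)

lemma kcode_length : ∀ n k, (kcode n k).length = n
  | 0, _ => rfl
  | n+1, k => by simp [kcode, kcode_length n]

lemma kcode_prefix : ∀ n m k j, n ≤ m → k < 2^n → j < 2^m →
    kcode n k <+: kcode m j → j / 2^(m-n) = k
  | 0, m, k, j, _, hk, hj, _ => by
      interval_cases k
      exact Nat.div_eq_of_lt (by simpa using hj)
  | n+1, m+1, k, j, hnm, hk, hj, hpre => by
      rw [kcode, kcode, List.cons_prefix_cons] at hpre
      obtain ⟨hb, htail⟩ := hpre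
      have hbit : (2^n ≤ k) ↔ (2^m ≤ j) := decide_eq_decide.mp hb
      have hn'm : n ≤ m := Nat.succ_le_succ_iff.mp hnm
      have hdm : m + 1 - (n + 1) = m - n := by omega
      have ih := kcode_prefix n m (k % 2^n) (j % 2^m) hn'm
        (Nat.mod_lt _ (Nat.two_pow_pos n))
        (Nat.mod_lt _ (Nat.two_pow_pos m)) htail
      rw [hdm]
      have hpow : 2^m = 2^(m-n) * 2^n := by
        rw [← pow_add]; congr 1; omega
      by_cases hc : 2^m ≤ j
      · have hck : 2^n ≤ k := hbit.mpr hc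
        have hjm : j % 2^m = j - 2^m := by
          rw [Nat.mod_eq_sub_mod hc, Nat.mod_eq_of_lt (by omega)]
        have hkm : k % 2^n = k - 2^n := by
          rw [Nat.mod_eq_sub_mod hck, Nat.mod_eq_of_lt (by omega)]
        have hj' : j = 2^(m-n) * 2^n + (j - 2^m) := by omega
        rw [hj', Nat.mul_add_div (Nat.two_pow_pos _) ..]
        rw [hjm, hkm] at ih
        omega
      · have hck : ¬ 2^n ≤ k := fun h => hc (hbit.mp h)
        rw [Nat.mod_eq_of_lt (by omega), Nat.mod_eq_of_lt (by omega)] at ih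
        exact ih

/-- The greedy allocation pointer: `kalloc c n` is the start of the block of
length-`n` codes, as a multiple of `2^{-n}`. -/
def kalloc (c : ℕ → ℕ) : ℕ → ℕ
  | 0 => 0
  | n+1 => 2 * (kalloc c n + c n)

lemma kalloc_scale (c : ℕ → ℕ) : ∀ m n, n < m →
    2^(m-n) * (kalloc c n + c n) ≤ kalloc c m := by
  intro m
  induction m with
  | zero => omega
  | succ m ih =>
    intro n hn
    rcases Nat.lt_or_ge n m with h | h
    · have h1 := ih n h
      have h2 : m + 1 - n = (m - n) + 1 := by omega
      rw [h2, pow_succ]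
      calc 2^(m-n) * 2 * (kalloc c n + c n)
          = 2 * (2^(m-n) * (kalloc c n + c n)) := by ring
        _ ≤ 2 * kalloc c m := by omega
        _ ≤ kalloc c (m+1) := by simp only [kalloc]; omega
    · have hnm : n = m := by omega
      subst hnm
      simp [kalloc]

/-- Kraft–Chaitin / Machine Existence, combinatorial part: if
`L ⊆ Σ* × ℕ` is a countable set of requests with `Σ_{(σ,n) ∈ L} 2^{-n} ≤ 1`, then there
is a prefix-free set `P` and an injective assignment of a code `τ ∈ P` with `|τ| = n`
to each request `(σ, n) ∈ L`. -/
theorem stmt_9 (L : Set (List Bool × ℕ)) (hc : L.Countable)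
    (hkraft : ∑' x : L, (2 : ℝ≥0∞)⁻¹ ^ (x : List Bool × ℕ).2 ≤ 1) :
    ∃ (P : Set (List Bool)) (F : L → List Bool),
      PrefixFree P ∧ Function.Injective F ∧
      ∀ x : L, F x ∈ P ∧ (F x).length = (x : List Bool × ℕ).2 := by
  classical
  set T : ℕ → Set (List Bool) := fun n => {σ | (σ, n) ∈ L} with hT
  -- each fibre is finite
  have hfin : ∀ n, (T n).Finite := by
    intro n
    by_contra hinf
    haveI : Infinite ↥(T n) := Set.infinite_coe_iff.mpr hinf
    have hinj : Function.Injective (fun σ : ↥(T n) => (⟨(σ.1, n), σ.2⟩ : ↥L)) := by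
      intro a b hab
      apply Subtype.ext
      simpa using congrArg (fun z : ↥L => z.1.1) hab
    have hle : ∑' _ : ↥(T n), (2 : ℝ≥0∞)⁻¹ ^ n
        ≤ ∑' x : ↥L, (2 : ℝ≥0∞)⁻¹ ^ (x : List Bool × ℕ).2 :=
      ENNReal.tsum_comp_le_tsum_of_injective hinj _
    have htop : ∑' _ : ↥(T n), (2 : ℝ≥0∞)⁻¹ ^ n = ⊤ :=
      ENNReal.tsum_const_eq_top_of_ne_zero
        (pow_ne_zero n (ENNReal.inv_ne_zero.mpr (by norm_num)))
    rw [htop] at hle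
    exact absurd (hle.trans hkraft) (by simp)
  haveI : ∀ n, Finite ↥(T n) := fun n => (hfin n).to_subtype
  set c : ℕ → ℕ := fun n => Nat.card ↥(T n) with hcdef
  obtain ⟨e⟩ : Nonempty (∀ n, ↥(T n) ≃ Fin (c n)) := ⟨fun n => Finite.equivFin _⟩
  -- rearrange the Kraft sum
  have hsum : ∑' n, (c n : ℝ≥0∞) * 2⁻¹ ^ n ≤ 1 := by
    calc ∑' n, (c n : ℝ≥0∞) * 2⁻¹ ^ n
        = ∑' n, ∑' _ : ↥(T n), (2 : ℝ≥0∞)⁻¹ ^ n := by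
          refine tsum_congr fun n => ?_
          haveI := (hfin n).fintype
          simp [tsum_fintype, Finset.sum_const, nsmul_eq_mul, hcdef,
            Nat.card_eq_fintype_card]
      _ = ∑' y : Σ n : ℕ, ↥(T n), (2 : ℝ≥0∞)⁻¹ ^ y.1 :=
          (ENNReal.tsum_sigma (fun n (_ : ↥(T n)) => (2 : ℝ≥0∞)⁻¹ ^ n)).symm
      _ = ∑' x : ↥L, (2 : ℝ≥0∞)⁻¹ ^ (x : List Bool × ℕ).2 :=
          (Equiv.tsum_eq (⟨fun x => ⟨x.1.2, ⟨x.1.1, x.2⟩⟩,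
            fun y => ⟨(y.2.1, y.1), y.2.2⟩, fun _ => rfl, fun _ => rfl⟩ :
              ↥L ≃ (Σ n : ℕ, ↥(T n)))
            (fun y : Σ n : ℕ, ↥(T n) => (2 : ℝ≥0∞)⁻¹ ^ y.1)).symm
      _ ≤ 1 := hkraft
  -- the allocation pointer is bounded
  have hbound : ∀ n, kalloc c n + c n ≤ 2 ^ n := by
    have hA : ∀ n, ((kalloc c n : ℕ) : ℝ≥0∞) * 2⁻¹ ^ n
        = ∑ m ∈ Finset.range n, (c m : ℝ≥0∞) * 2⁻¹ ^ m := by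
      intro n
      induction n with
      | zero => simp [kalloc]
      | succ n ih =>
        rw [Finset.sum_range_succ, ← ih]
        show (((2 * (kalloc c n + c n) : ℕ)) : ℝ≥0∞) * 2⁻¹ ^ (n+1) = _
        push_cast
        have h2 : (2 : ℝ≥0∞) * 2⁻¹ = 1 :=
          ENNReal.mul_inv_cancel (by norm_num) (by norm_num)
        calc (2 : ℝ≥0∞) * ((kalloc c n : ℝ≥0∞) + c n) * 2⁻¹ ^ (n+1)
            = (2 * 2⁻¹) * (((kalloc c n : ℝ≥0∞) + c n) * 2⁻¹ ^ n) := by ring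
          _ = (kalloc c n : ℝ≥0∞) * 2⁻¹ ^ n + (c n : ℝ≥0∞) * 2⁻¹ ^ n := by
              rw [h2]; ring
    intro n
    have h1 : (((kalloc c n + c n : ℕ)) : ℝ≥0∞) * 2⁻¹ ^ n ≤ 1 := by
      push_cast
      calc ((kalloc c n : ℝ≥0∞) + c n) * 2⁻¹ ^ n
          = (kalloc c n : ℝ≥0∞) * 2⁻¹ ^ n + (c n : ℝ≥0∞) * 2⁻¹ ^ n := by ring
        _ = ∑ m ∈ Finset.range (n+1), (c m : ℝ≥0∞) * 2⁻¹ ^ m := by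
            rw [hA n, Finset.sum_range_succ]
        _ ≤ ∑' m, (c m : ℝ≥0∞) * 2⁻¹ ^ m := ENNReal.sum_le_tsum _
        _ ≤ 1 := hsum
    have h2 : (((kalloc c n + c n : ℕ)) : ℝ≥0∞) ≤ ((2 ^ n : ℕ) : ℝ≥0∞) := by
      rw [← ENNReal.inv_pow, ← div_eq_mul_inv] at h1
      have := (ENNReal.div_le_iff_le_mul (Or.inl (by positivity))
        (Or.inl (by simp [ENNReal.pow_ne_top]))).mp h1
      push_cast
      simpa using this
    exact_mod_cast h2
  -- the coding function
  set F : ↥L → List Bool :=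
    fun x => kcode x.1.2 (kalloc c x.1.2 + (e x.1.2 ⟨x.1.1, x.2⟩).val) with hF
  have hklt : ∀ x : ↥L, kalloc c x.1.2 + (e x.1.2 ⟨x.1.1, x.2⟩).val < 2 ^ x.1.2 := by
    intro x
    have := (e x.1.2 ⟨x.1.1, x.2⟩).isLt
    have := hbound x.1.2
    omega
  have hlen : ∀ x : ↥L, (F x).length = x.1.2 := fun x => kcode_length _ _
  -- the key prefix fact
  have hkey : ∀ x y : ↥L, F x <+: F y → x = y := by
    rintro ⟨⟨σx, nx⟩, hx⟩ ⟨⟨σy, ny⟩, hy⟩ hpre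
    have hle : nx ≤ ny := by
      have := hpre.length_le
      rwa [hlen ⟨(σx, nx), hx⟩, hlen ⟨(σy, ny), hy⟩] at this
    have hkx := hklt ⟨(σx, nx), hx⟩
    have hky := hklt ⟨(σy, ny), hy⟩
    simp only at hkx hky
    have hdiv := kcode_prefix nx ny _ _ hle hkx hky hpre
    rcases Nat.lt_or_ge nx ny with hlt | hge
    · exfalso
      have h1 : kalloc c nx + (e nx ⟨σx, hx⟩).val + 1 ≤ kalloc c nx + c nx :=
        by have := (e nx ⟨σx, hx⟩).isLt; omega
      have h2 : 2 ^ (ny - nx) * (kalloc c nx + c nx) ≤ kalloc c ny :=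
        kalloc_scale c ny nx hlt
      have h3 : 2 ^ (ny - nx) * (kalloc c nx + (e nx ⟨σx, hx⟩).val + 1)
          ≤ kalloc c ny + (e ny ⟨σy, hy⟩).val := by
        have := Nat.mul_le_mul_left (2 ^ (ny - nx)) h1
        omega
      have h4 := (Nat.le_div_iff_mul_le (Nat.two_pow_pos (ny - nx))).mpr
        (by linarith [h3] : (kalloc c nx + (e nx ⟨σx, hx⟩).val + 1) * 2 ^ (ny - nx)
          ≤ kalloc c ny + (e ny ⟨σy, hy⟩).val)
      omega
    · have hnn : nx = ny := by omega
      subst hnn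
      simp only [Nat.sub_self, pow_zero, Nat.div_one] at hdiv
      have hi : (e nx ⟨σy, hy⟩).val = (e nx ⟨σx, hx⟩).val := by omega
      have := (e nx).injective (Fin.ext hi)
      have hσ : σy = σx := congrArg Subtype.val this
      subst hσ
      rfl
  refine ⟨Set.range F, F, ?_, ?_, ?_⟩
  · rintro p ⟨x, rfl⟩ q ⟨y, rfl⟩ h
    exact congrArg F (hkey x y h)
  · intro x y h
    exact hkey x y (h ▸ List.prefix_rfl)
  · intro x
    exact ⟨Set.mem_range_self x, hlen x⟩
end

section
/- Let d be a martingale and define oracle martingales h and g by h^Y(λ)=g^X(λ)=d(λ)=1, h^Y(X↾n) = [d((X⊎Y)↾(2n−1)) / d((X⊎Y)↾(2n−2))] · h^Y(X↾(n−1)), and g^X(Y↾n) = [d((X⊎Y)↾2n) / d((X⊎Y)↾(2n−1))] · g^X(Y↾(n−1)) (assuming d is strictly positive along X⊎Y). Then h^Y(X↾n) · g^X(Y↾n) = d((X⊎Y)↾2n) for all n, and for every fixed Y the function σ ↦ h^Y(σ) is a martingale, and for every fixed X the function τ ↦ g^X(τ) is a martingale. -/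
def interleave (A B : ℕ → Bool) : ℕ → Bool :=
  fun n => if n % 2 = 0 then A (n / 2) else B (n / 2)

lemma pre_length (X : ℕ → Bool) (n : ℕ) : (pre X n).length = n := by simp [pre]

lemma pre_succ (X : ℕ → Bool) (n : ℕ) : pre X (n+1) = pre X n ++ [X n] := by
  rw [pre, List.ofFn_succ']
  simp [pre, Fin.last]

lemma ilv_nil (τ : List Bool) : ilv [] τ = τ := by simp [ilv]
lemma ilv_cons (a : Bool) (σ τ : List Bool) : ilv (a :: σ) τ = a :: ilv τ σ := by
  rw [ilv]

lemma ilv_app : ∀ (n : ℕ) (σ τ : List Bool) (b : Bool), σ.length + τ.length ≤ n →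
    (τ.length = σ.length → ilv (σ ++ [b]) τ = ilv σ τ ++ [b]) ∧
    (σ.length = τ.length + 1 → ilv σ (τ ++ [b]) = ilv σ τ ++ [b]) := by
  intro n
  induction n with
  | zero =>
    intro σ τ b hlen
    have hσ : σ = [] := by
      cases σ with
      | nil => rfl
      | cons a s => simp at hlen
    have hτ : τ = [] := by
      cases τ with
      | nil => rfl
      | cons a s => simp at hlen
    subst hσ; subst hτ
    constructor
    · intro _; simp [ilv_nil, ilv_cons]
    · intro hc; simp at hc
  | succ n ih =>
    intro σ τ b hlen
    constructor
    · intro hτσ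
      cases σ with
      | nil =>
        have : τ = [] := by
          cases τ with
          | nil => rfl
          | cons a s => simp at hτσ
        subst this
        simp [ilv_nil, ilv_cons]
      | cons a σ' =>
        have h1 : (a :: σ') ++ [b] = a :: (σ' ++ [b]) := rfl
        rw [h1, ilv_cons, ilv_cons]
        have h2 := (ih τ σ' b (by simp at hlen ⊢; omega)).2 (by simp at hτσ; omega)
        rw [h2]; rfl
    · intro hστ
      cases σ with
      | nil => simp at hστ
      | cons a σ' =>
        rw [ilv_cons, ilv_cons]
        have h2 := (ih τ σ' b (by simp at hlen ⊢; omega)).1 (by simp at hστ; omega)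
        rw [h2]; rfl

lemma ilv_app_left (σ τ : List Bool) (b : Bool) (hl : τ.length = σ.length) :
    ilv (σ ++ [b]) τ = ilv σ τ ++ [b] :=
  (ilv_app (σ.length + τ.length) σ τ b le_rfl).1 hl

lemma ilv_app_right (σ τ : List Bool) (b : Bool) (hl : σ.length = τ.length + 1) :
    ilv σ (τ ++ [b]) = ilv σ τ ++ [b] :=
  (ilv_app (σ.length + τ.length) σ τ b le_rfl).2 hl

lemma pre_ilv (X Y : ℕ → Bool) : ∀ n, pre (interleave X Y) (2*n) = ilv (pre X n) (pre Y n) := by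
  intro n
  induction n with
  | zero => simp [pre, ilv_nil]
  | succ n ih =>
    have e1 : 2 * (n+1) = (2*n + 1) + 1 := by ring
    rw [e1, pre_succ, pre_succ, ih, pre_succ, pre_succ]
    rw [ilv_app_right _ _ _ (by simp [pre_length]),
        ilv_app_left _ _ _ (by simp [pre_length])]
    have hI1 : interleave X Y (2*n) = X n := by
      simp [interleave, Nat.mul_div_cancel_left]
    have hI2 : interleave X Y (2*n+1) = Y n := by
      have : (2*n+1) % 2 = 1 := by omega
      simp [interleave, this]
      congr 1; omega
    rw [hI1, hI2, List.append_assoc]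
/-- Let `d` be a strictly positive martingale and define the oracle
functions `h` and `g` telescopically: `h^Y(λ) = g^X(λ) = d(λ) = 1`,
`h^Y(X↾n) = [d((X⊎Y)↾(2n−1))/d((X⊎Y)↾(2n−2))]·h^Y(X↾(n−1))` and
`g^X(Y↾n) = [d((X⊎Y)↾2n)/d((X⊎Y)↾(2n−1))]·g^X(Y↾(n−1))`. Then
`h^Y(X↾n)·g^X(Y↾n) = d((X⊎Y)↾2n)` for all `n`, and for each fixed `Y` (resp. `X`) the
function `σ ↦ h^Y(σ)` (resp. `τ ↦ g^X(τ)`) is a martingale. -/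
theorem stmt_16 (d : List Bool → ℝ) (hpos : ∀ σ, 0 < d σ) (hd0 : d [] = 1)
    (hmart : ∀ σ, d (σ ++ [false]) + d (σ ++ [true]) = 2 * d σ)
    (h g : (ℕ → Bool) → List Bool → ℝ)
    (hh0 : ∀ Y, h Y [] = 1) (hg0 : ∀ X, g X [] = 1)
    (hhrec : ∀ (Y : ℕ → Bool) (σ : List Bool) (b : Bool),
      h Y (σ ++ [b]) =
        d (ilv (σ ++ [b]) (pre Y σ.length)) / d (ilv σ (pre Y σ.length)) * h Y σ)
    (hgrec : ∀ (X : ℕ → Bool) (τ : List Bool) (b : Bool),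
      g X (τ ++ [b]) =
        d (ilv (pre X (τ.length + 1)) (τ ++ [b])) /
          d (ilv (pre X (τ.length + 1)) τ) * g X τ) :
    (∀ (X Y : ℕ → Bool) (n : ℕ),
      h Y (pre X n) * g X (pre Y n) = d (pre (interleave X Y) (2 * n))) ∧
    (∀ Y : ℕ → Bool, (∀ σ, 0 ≤ h Y σ) ∧
      ∀ σ, h Y (σ ++ [false]) + h Y (σ ++ [true]) = 2 * h Y σ) ∧
    (∀ X : ℕ → Bool, (∀ τ, 0 ≤ g X τ) ∧
      ∀ τ, g X (τ ++ [false]) + g X (τ ++ [true]) = 2 * g X τ) := by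
  -- cleaned-up recursions
  have hstep : ∀ (Y : ℕ → Bool) (σ : List Bool) (b : Bool),
      h Y (σ ++ [b]) = d (ilv σ (pre Y σ.length) ++ [b]) / d (ilv σ (pre Y σ.length)) * h Y σ := by
    intro Y σ b
    rw [hhrec Y σ b, ilv_app_left _ _ _ (by simp [pre_length])]
  have gstep : ∀ (X : ℕ → Bool) (τ : List Bool) (b : Bool),
      g X (τ ++ [b]) = d (ilv (pre X (τ.length + 1)) τ ++ [b]) /
          d (ilv (pre X (τ.length + 1)) τ) * g X τ := by
    intro X τ b
    rw [hgrec X τ b, ilv_app_right _ _ _ (by simp [pre_length])]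
  have hpos' : ∀ (Y : ℕ → Bool) (σ : List Bool), 0 < h Y σ := by
    intro Y σ
    induction σ using List.reverseRecOn with
    | nil => rw [hh0]; norm_num
    | append_singleton σ b ih =>
      rw [hstep]
      exact mul_pos (div_pos (hpos _) (hpos _)) ih
  have gpos' : ∀ (X : ℕ → Bool) (τ : List Bool), 0 < g X τ := by
    intro X τ
    induction τ using List.reverseRecOn with
    | nil => rw [hg0]; norm_num
    | append_singleton τ b ih =>
      rw [gstep]
      exact mul_pos (div_pos (hpos _) (hpos _)) ih
  refine ⟨?_, ?_, ?_⟩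
  · intro X Y n
    induction n with
    | zero => simp [pre, hh0, hg0, hd0]
    | succ n ih =>
      set w0 := pre (interleave X Y) (2*n) with hw0
      have hIX : interleave X Y (2*n) = X n := by
        simp [interleave, Nat.mul_div_cancel_left]
      have hIY : interleave X Y (2*n+1) = Y n := by
        have h2 : (2*n+1) % 2 = 1 := by omega
        simp [interleave, h2]
        congr 1; omega
      have e1 : 2 * (n+1) = (2*n + 1) + 1 := by ring
      have hful : pre (interleave X Y) (2*(n+1)) = (w0 ++ [X n]) ++ [Y n] := by
        rw [e1, pre_succ, pre_succ, hIX, hIY]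
      have hmid : ilv (pre X (n+1)) (pre Y n) = w0 ++ [X n] := by
        rw [pre_succ, ilv_app_left _ _ _ (by simp [pre_length]), ← pre_ilv]
      have hH : h Y (pre X (n+1)) = d (w0 ++ [X n]) / d w0 * h Y (pre X n) := by
        rw [pre_succ, hstep, pre_length, ← pre_ilv]
      have hG : g X (pre Y (n+1)) = d ((w0 ++ [X n]) ++ [Y n]) / d (w0 ++ [X n]) * g X (pre Y n) := by
        rw [pre_succ, gstep, pre_length, hmid]
      rw [hH, hG, hful]
      have h0 : d w0 ≠ 0 := (hpos _).ne'
      have h1 : d (w0 ++ [X n]) ≠ 0 := (hpos _).ne'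
      field_simp
      calc h Y (pre X n) * d (w0 ++ [X n] ++ [Y n]) * g X (pre Y n)
          = d (w0 ++ [X n] ++ [Y n]) * (h Y (pre X n) * g X (pre Y n)) := by ring
        _ = d w0 * d (w0 ++ [X n] ++ [Y n]) := by rw [ih]; ring
  · intro Y
    refine ⟨fun σ => (hpos' Y σ).le, fun σ => ?_⟩
    rw [hstep, hstep]
    have h0 : d (ilv σ (pre Y σ.length)) ≠ 0 := (hpos _).ne'
    field_simp
    rw [hmart]
    ring
  · intro X
    refine ⟨fun τ => (gpos' X τ).le, fun τ => ?_⟩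
    rw [gstep, gstep]
    have h0 : d (ilv (pre X (τ.length + 1)) τ) ≠ 0 := (hpos _).ne'
    field_simp
    rw [hmart]
    ring
end
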